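/- Let R = (0,h₁)×(0,h₂) and Δt > 0, and let u ∈ L²((0,Δt), H⁰(R)) be such that its mean-zero part satisfies the anisotropic Poincaré inequality. Then for the orthogonal projection U of u onto constants, the negative-norm error obeys the duality bound: ‖u − U‖_{L²((0,Δt), H^{−1}(R))} ≤ C · max{h₁, h₂, Δt} · (Δt·‖∂_t u‖_{L²} + h₁·‖∂_x u‖_{L²} + h₂·‖∂_y u‖_{L²}), provided u ∈ H¹((0,Δt)×R). -/

import Mathlib

open Real MeasureTheory Set

-- generic integrability helper
lemma intOn {X : Type*} [MeasureSpace X] [TopologicalSpace X] [OpensMeasurableSpace X]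
    [T2Space X] [IsFiniteMeasureOnCompacts (volume : Measure X)]
    {f : X → ℝ} (hf : Continuous f) {s K : Set X} (hK : IsCompact K) (hsK : s ⊆ K) :
    IntegrableOn f s :=
  (hf.continuousOn.integrableOn_compact hK).mono_set hsK

-- Cauchy-Schwarz
lemma cs {α : Type*} [MeasurableSpace α] (μ : Measure α) [IsFiniteMeasure μ]
    {f g : α → ℝ} (hf : MemLp f 2 μ) (hg : MemLp g 2 μ) :
    |∫ a, f a * g a ∂μ| ≤ Real.sqrt (∫ a, (f a)^2 ∂μ) * Real.sqrt (∫ a, (g a)^2 ∂μ) := by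
  have h2 : Real.HolderConjugate 2 2 := Real.HolderConjugate.two_two
  have hf2 : MemLp f (ENNReal.ofReal 2) μ := by simpa using hf
  have hg2 : MemLp g (ENNReal.ofReal 2) μ := by simpa using hg
  have := MeasureTheory.integral_mul_norm_le_Lp_mul_Lq h2 hf2 hg2
  calc |∫ a, f a * g a ∂μ| ≤ ∫ a, |f a * g a| ∂μ := by
        simpa [Real.norm_eq_abs, abs_mul] using norm_integral_le_integral_norm (μ := μ) (fun a => f a * g a)
    _ = ∫ a, ‖f a‖ * ‖g a‖ ∂μ := by simp [abs_mul]
    _ ≤ (∫ a, ‖f a‖ ^ (2:ℝ) ∂μ) ^ ((1:ℝ)/2) * (∫ a, ‖g a‖ ^ (2:ℝ) ∂μ) ^ ((1:ℝ)/2) := this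
    _ = Real.sqrt (∫ a, (f a)^2 ∂μ) * Real.sqrt (∫ a, (g a)^2 ∂μ) := by
        rw [Real.sqrt_eq_rpow, Real.sqrt_eq_rpow]
        have e : ∀ h : α → ℝ, (fun x => ‖h x‖ ^ (2:ℝ)) = fun x => (h x)^2 := by
          intro h; funext x
          rw [show ((2:ℝ)) = ((2:ℕ):ℝ) by norm_num, Real.rpow_natCast, Real.norm_eq_abs, sq_abs]
        rw [e f, e g]

lemma memL2 {X : Type*} [MeasureSpace X] [TopologicalSpace X] [OpensMeasurableSpace X]
    [T2Space X] [IsFiniteMeasureOnCompacts (volume : Measure X)]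
    {f : X → ℝ} (hf : Continuous f) {s K : Set X} (hK : IsCompact K) (hsK : s ⊆ K) :
    MemLp f 2 (volume.restrict s) := by
  rw [memLp_two_iff_integrable_sq hf.aestronglyMeasurable]
  exact intOn (by continuity) hK hsK

lemma finRestrict {X : Type*} [MeasureSpace X] {s : Set X} (h : volume s < ⊤) :
    IsFiniteMeasure ((volume : Measure X).restrict s) := by
  constructor; rw [Measure.restrict_apply_univ]; exact h

lemma cs1d {g : ℝ → ℝ} (hg : Continuous g) {a s t : ℝ}
    (hs : s ∈ Icc (0:ℝ) a) (ht : t ∈ Icc (0:ℝ) a) :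
    (∫ x in s..t, g x)^2 ≤ a * ∫ x in Ioc 0 a, (g x)^2 := by
  have key : ∀ s t : ℝ, s ∈ Icc (0:ℝ) a → t ∈ Icc (0:ℝ) a → s ≤ t →
      (∫ x in s..t, g x)^2 ≤ a * ∫ x in Ioc 0 a, (g x)^2 := by
    intro s t hs ht hst
    rw [intervalIntegral.integral_of_le hst]
    haveI := finRestrict (s := Ioc s t) (measure_Ioc_lt_top)
    have hsub : Ioc s t ⊆ Ioc 0 a := Ioc_subset_Ioc hs.1 ht.2
    have h1 : MemLp g 2 (volume.restrict (Ioc s t)) :=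
      memL2 hg isCompact_Icc (Ioc_subset_Icc_self.trans (Icc_subset_Icc hs.1 ht.2))
    have h2 : MemLp (fun _ : ℝ => (1:ℝ)) 2 (volume.restrict (Ioc s t)) :=
      memLp_const 1
    have hcs := cs _ h1 h2
    simp only [mul_one, one_pow] at hcs
    have hA : (0:ℝ) ≤ ∫ x in Ioc s t, (g x)^2 :=
      setIntegral_nonneg measurableSet_Ioc fun x _ => by positivity
    have hB : (0:ℝ) ≤ ∫ x in Ioc s t, (1:ℝ) :=
      setIntegral_nonneg measurableSet_Ioc fun x _ => by positivity
    have habs : (∫ x in Ioc s t, g x)^2 ≤ (∫ x in Ioc s t, (g x)^2) * (∫ x in Ioc s t, (1:ℝ)) := by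
      calc (∫ x in Ioc s t, g x)^2 = |∫ x in Ioc s t, g x|^2 := (sq_abs _).symm
        _ ≤ (Real.sqrt (∫ x in Ioc s t, (g x)^2) * Real.sqrt (∫ x in Ioc s t, (1:ℝ)))^2 :=
            pow_le_pow_left₀ (abs_nonneg _) hcs 2
        _ = _ := by rw [mul_pow, Real.sq_sqrt hA, Real.sq_sqrt hB]
    have hlen : (∫ x in Ioc s t, (1:ℝ)) ≤ a := by
      rw [setIntegral_const, smul_eq_mul, mul_one, measureReal_def, Real.volume_Ioc,
        ENNReal.toReal_ofReal (by linarith)]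
      linarith [hs.1, ht.2]
    have hmono : (∫ x in Ioc s t, (g x)^2) ≤ ∫ x in Ioc 0 a, (g x)^2 := by
      apply setIntegral_mono_set (intOn (by continuity) isCompact_Icc Ioc_subset_Icc_self)
        (Filter.Eventually.of_forall fun x => by positivity)
        (HasSubset.Subset.eventuallyLE hsub)
    calc (∫ x in Ioc s t, g x)^2 ≤ (∫ x in Ioc s t, (g x)^2) * (∫ x in Ioc s t, (1:ℝ)) := habs
      _ ≤ (∫ x in Ioc 0 a, (g x)^2) * a := by
          apply mul_le_mul hmono hlen
            (setIntegral_nonneg measurableSet_Ioc fun x _ => by positivity)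
            (le_trans (setIntegral_nonneg measurableSet_Ioc fun x _ => by positivity) hmono)
      _ = a * ∫ x in Ioc 0 a, (g x)^2 := mul_comm _ _
  rcases le_total s t with h | h
  · exact key s t hs ht h
  · rw [intervalIntegral.integral_symm, neg_sq]; exact key t s ht hs h

lemma ftc1 {w : ℝ×ℝ×ℝ → ℝ} (hw : ContDiff ℝ 1 w) (s t x y : ℝ) :
    w (t,x,y) - w (s,x,y) = ∫ τ in s..t, fderiv ℝ w (τ,x,y) (1,0,0) := by
  symm
  apply intervalIntegral.integral_eq_sub_of_hasDerivAt
  · intro τ _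
    have hline : HasDerivAt (fun τ : ℝ => ((τ,x,y) : ℝ×ℝ×ℝ)) (1,0,0) τ :=
      HasDerivAt.prodMk (hasDerivAt_id τ) (HasDerivAt.prodMk (hasDerivAt_const τ x) (hasDerivAt_const τ y))
    exact ((hw.differentiable one_ne_zero (τ,x,y)).hasFDerivAt).comp_hasDerivAt τ hline
  · apply Continuous.intervalIntegrable
    exact ((hw.continuous_fderiv one_ne_zero).comp (by continuity)).clm_apply continuous_const

lemma ftc2 {w : ℝ×ℝ×ℝ → ℝ} (hw : ContDiff ℝ 1 w) (t s x y : ℝ) :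
    w (t,x,y) - w (t,s,y) = ∫ ξ in s..x, fderiv ℝ w (t,ξ,y) (0,1,0) := by
  symm
  apply intervalIntegral.integral_eq_sub_of_hasDerivAt
  · intro ξ _
    have hline : HasDerivAt (fun ξ : ℝ => ((t,ξ,y) : ℝ×ℝ×ℝ)) (0,1,0) ξ :=
      HasDerivAt.prodMk (hasDerivAt_const ξ t) (HasDerivAt.prodMk (hasDerivAt_id ξ) (hasDerivAt_const ξ y))
    exact ((hw.differentiable one_ne_zero (t,ξ,y)).hasFDerivAt).comp_hasDerivAt ξ hline
  · apply Continuous.intervalIntegrable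
    exact ((hw.continuous_fderiv one_ne_zero).comp (by continuity)).clm_apply continuous_const

lemma ftc3 {w : ℝ×ℝ×ℝ → ℝ} (hw : ContDiff ℝ 1 w) (t x s y : ℝ) :
    w (t,x,y) - w (t,x,s) = ∫ η in s..y, fderiv ℝ w (t,x,η) (0,0,1) := by
  symm
  apply intervalIntegral.integral_eq_sub_of_hasDerivAt
  · intro η _
    have hline : HasDerivAt (fun η : ℝ => ((t,x,η) : ℝ×ℝ×ℝ)) (0,0,1) η :=
      HasDerivAt.prodMk (hasDerivAt_const η t) (HasDerivAt.prodMk (hasDerivAt_const η x) (hasDerivAt_id η))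
    exact ((hw.differentiable one_ne_zero (t,x,η)).hasFDerivAt).comp_hasDerivAt η hline
  · apply Continuous.intervalIntegrable
    exact ((hw.continuous_fderiv one_ne_zero).comp (by continuity)).clm_apply continuous_const

lemma pointwise_bd {w : ℝ×ℝ×ℝ → ℝ} (hw : ContDiff ℝ 1 w) {a b c : ℝ}
    {p q : ℝ×ℝ×ℝ} (hp : p ∈ Ioc (0:ℝ) a ×ˢ (Ioc (0:ℝ) b ×ˢ Ioc (0:ℝ) c))
    (hq : q ∈ Ioc (0:ℝ) a ×ˢ (Ioc (0:ℝ) b ×ˢ Ioc (0:ℝ) c)) :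
    (w p - w q)^2 ≤ 3 * (a * (∫ τ in Ioc (0:ℝ) a, (fderiv ℝ w (τ, p.2.1, p.2.2) (1,0,0))^2)
      + b * (∫ ξ in Ioc (0:ℝ) b, (fderiv ℝ w (q.1, ξ, p.2.2) (0,1,0))^2)
      + c * (∫ η in Ioc (0:ℝ) c, (fderiv ℝ w (q.1, q.2.1, η) (0,0,1))^2)) := by
  obtain ⟨hp1, hp2, hp3⟩ : p.1 ∈ Ioc (0:ℝ) a ∧ p.2.1 ∈ Ioc (0:ℝ) b ∧ p.2.2 ∈ Ioc (0:ℝ) c := by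
    simpa [Set.mem_prod] using hp
  obtain ⟨hq1, hq2, hq3⟩ : q.1 ∈ Ioc (0:ℝ) a ∧ q.2.1 ∈ Ioc (0:ℝ) b ∧ q.2.2 ∈ Ioc (0:ℝ) c := by
    simpa [Set.mem_prod] using hq
  obtain ⟨t, x, y⟩ := p
  obtain ⟨s, x', y'⟩ := q
  simp only at hp1 hp2 hp3 hq1 hq2 hq3 ⊢
  have hcf : Continuous (fderiv ℝ w) := hw.continuous_fderiv one_ne_zero
  set A := ∫ τ in s..t, fderiv ℝ w (τ,x,y) (1,0,0) with hA
  set B := ∫ ξ in x'..x, fderiv ℝ w (s,ξ,y) (0,1,0) with hB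
  set C := ∫ η in y'..y, fderiv ℝ w (s,x',η) (0,0,1) with hC
  have hsplit : w (t,x,y) - w (s,x',y') = A + B + C := by
    rw [hA, hB, hC, ← ftc1 hw s t x y, ← ftc2 hw s x' x y, ← ftc3 hw s x' y' y]
    ring
  have h1 : A^2 ≤ a * ∫ τ in Ioc (0:ℝ) a, (fderiv ℝ w (τ,x,y) (1,0,0))^2 :=
    cs1d (((hcf.comp (by continuity)).clm_apply continuous_const))
      (Ioc_subset_Icc_self hq1) (Ioc_subset_Icc_self hp1)
  have h2 : B^2 ≤ b * ∫ ξ in Ioc (0:ℝ) b, (fderiv ℝ w (s,ξ,y) (0,1,0))^2 :=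
    cs1d (((hcf.comp (by continuity)).clm_apply continuous_const))
      (Ioc_subset_Icc_self hq2) (Ioc_subset_Icc_self hp2)
  have h3 : C^2 ≤ c * ∫ η in Ioc (0:ℝ) c, (fderiv ℝ w (s,x',η) (0,0,1))^2 :=
    cs1d (((hcf.comp (by continuity)).clm_apply continuous_const))
      (Ioc_subset_Icc_self hq3) (Ioc_subset_Icc_self hp3)
  rw [hsplit]
  nlinarith [sq_nonneg (A - B), sq_nonneg (B - C), sq_nonneg (A - C)]

section infra
variable {a b c : ℝ}

instance : IsFiniteMeasureOnCompacts (volume : Measure (ℝ×ℝ)) :=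
  Measure.prod.instIsFiniteMeasureOnCompacts volume volume

instance : IsFiniteMeasureOnCompacts (volume : Measure (ℝ×ℝ×ℝ)) :=
  Measure.prod.instIsFiniteMeasureOnCompacts volume volume

instance : IsFiniteMeasureOnCompacts (volume : Measure ((ℝ×ℝ×ℝ)×(ℝ×ℝ×ℝ))) :=
  Measure.prod.instIsFiniteMeasureOnCompacts volume volume

lemma boxIcc_compact : IsCompact (Icc (0:ℝ) a ×ˢ (Icc (0:ℝ) b ×ˢ Icc (0:ℝ) c)) :=
  isCompact_Icc.prod (isCompact_Icc.prod isCompact_Icc)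

lemma box_sub : Ioc (0:ℝ) a ×ˢ (Ioc (0:ℝ) b ×ˢ Ioc (0:ℝ) c) ⊆
    Icc (0:ℝ) a ×ˢ (Icc (0:ℝ) b ×ˢ Icc (0:ℝ) c) :=
  Set.prod_mono Ioc_subset_Icc_self (Set.prod_mono Ioc_subset_Icc_self Ioc_subset_Icc_self)

lemma box_intOn {f : ℝ×ℝ×ℝ → ℝ} (hf : Continuous f) :
    IntegrableOn f (Ioc (0:ℝ) a ×ˢ (Ioc (0:ℝ) b ×ˢ Ioc (0:ℝ) c)) :=
  intOn hf boxIcc_compact box_sub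

lemma box2_intOn {f : (ℝ×ℝ×ℝ)×(ℝ×ℝ×ℝ) → ℝ} (hf : Continuous f) :
    IntegrableOn f ((Ioc (0:ℝ) a ×ˢ (Ioc (0:ℝ) b ×ˢ Ioc (0:ℝ) c)) ×ˢ
      (Ioc (0:ℝ) a ×ˢ (Ioc (0:ℝ) b ×ˢ Ioc (0:ℝ) c))) :=
  intOn hf (boxIcc_compact.prod boxIcc_compact) (Set.prod_mono box_sub box_sub)

lemma box_vol (ha : 0 ≤ a) (hb : 0 ≤ b) (hc : 0 ≤ c) :
    (volume (Ioc (0:ℝ) a ×ˢ (Ioc (0:ℝ) b ×ˢ Ioc (0:ℝ) c))).toReal = a * b * c := by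
  rw [Measure.volume_eq_prod, Measure.prod_prod, Measure.volume_eq_prod, Measure.prod_prod,
    Real.volume_Ioc, Real.volume_Ioc, Real.volume_Ioc]
  simp only [sub_zero]
  rw [← ENNReal.ofReal_mul hb, ← ENNReal.ofReal_mul ha, ENNReal.toReal_ofReal (by positivity)]
  ring

lemma box_vol_lt_top : volume (Ioc (0:ℝ) a ×ˢ (Ioc (0:ℝ) b ×ˢ Ioc (0:ℝ) c)) < ⊤ := by
  rw [Measure.volume_eq_prod, Measure.prod_prod, Measure.volume_eq_prod, Measure.prod_prod,
    Real.volume_Ioc, Real.volume_Ioc, Real.volume_Ioc]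
  exact ENNReal.mul_lt_top ENNReal.ofReal_lt_top
    (ENNReal.mul_lt_top ENNReal.ofReal_lt_top ENNReal.ofReal_lt_top)

lemma set_swap {X Y : Type*} [MeasureSpace X] [MeasureSpace Y]
    [SigmaFinite (volume : Measure X)] [SigmaFinite (volume : Measure Y)]
    {s : Set X} {t : Set Y} {f : X → Y → ℝ}
    (hf : IntegrableOn (fun r : X × Y => f r.1 r.2) (s ×ˢ t)) :
    ∫ x in s, ∫ y in t, f x y = ∫ y in t, ∫ x in s, f x y := by
  apply integral_integral_swap
  rw [Measure.prod_restrict]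
  rwa [IntegrableOn, Measure.volume_eq_prod] at hf

lemma set_split {X Y : Type*} [MeasureSpace X] [MeasureSpace Y]
    [SigmaFinite (volume : Measure X)] [SigmaFinite (volume : Measure Y)]
    {s : Set X} {t : Set Y} {f : X × Y → ℝ}
    (hf : IntegrableOn f (s ×ˢ t)) :
    ∫ r in s ×ˢ t, f r = ∫ x in s, ∫ y in t, f (x, y) := by
  rw [show ((volume : Measure (X × Y))) = (volume : Measure X).prod volume from rfl] at hf ⊢
  exact setIntegral_prod f hf

lemma expand_sq {α : Type*} [MeasurableSpace α] (μ : Measure α) [IsFiniteMeasure μ]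
    {w : α → ℝ} (h1 : Integrable w μ) (h2 : Integrable (fun x => (w x)^2) μ) (k : ℝ) :
    ∫ x, (w x - k)^2 ∂μ =
      (∫ x, (w x)^2 ∂μ) - 2*k*(∫ x, w x ∂μ) + k^2*(μ univ).toReal := by
  have e : (fun x => (w x - k)^2) = fun x => ((w x)^2 - (2*k)*w x) + k^2 :=
    funext fun x => by ring
  have hmul : Integrable (fun x => (2*k)*w x) μ := h1.const_mul _
  have hsub : Integrable (fun x => (w x)^2 - (2*k)*w x) μ := h2.sub hmul
  rw [e, integral_add hsub (integrable_const _),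
    integral_sub h2 hmul, integral_const_mul, integral_const, smul_eq_mul, measureReal_def]
  ring

end infra

section claims
variable {a b c : ℝ}

lemma Ioc_vol (ha : 0 ≤ a) : (volume (Ioc (0:ℝ) a)).toReal = a := by
  rw [Real.volume_Ioc, sub_zero, ENNReal.toReal_ofReal ha]

lemma box2_vol (hb : 0 ≤ b) (hc : 0 ≤ c) :
    (volume (Ioc (0:ℝ) b ×ˢ Ioc (0:ℝ) c)).toReal = b * c := by
  rw [Measure.volume_eq_prod, Measure.prod_prod, Real.volume_Ioc, Real.volume_Ioc]
  simp only [sub_zero]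
  rw [← ENNReal.ofReal_mul hb, ENNReal.toReal_ofReal (by positivity)]

lemma box2_intOn' {f : ℝ×ℝ → ℝ} (hf : Continuous f) :
    IntegrableOn f (Ioc (0:ℝ) b ×ˢ Ioc (0:ℝ) c) :=
  intOn hf (isCompact_Icc.prod isCompact_Icc)
    (Set.prod_mono Ioc_subset_Icc_self Ioc_subset_Icc_self)

lemma setint_const {X : Type*} [MeasureSpace X] (s : Set X) (k : ℝ) :
    ∫ _ in s, k = (volume s).toReal * k := by rw [setIntegral_const, smul_eq_mul, measureReal_def]

-- claim 1
lemma claim1 (ha : 0 < a) (hb : 0 < b) (hc : 0 < c)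
    {w : ℝ×ℝ×ℝ → ℝ} (hw : ContDiff ℝ 1 w) :
    ∫ r in (Ioc (0:ℝ) a ×ˢ (Ioc (0:ℝ) b ×ˢ Ioc (0:ℝ) c)) ×ˢ
        (Ioc (0:ℝ) a ×ˢ (Ioc (0:ℝ) b ×ˢ Ioc (0:ℝ) c)),
      (∫ τ in (0:ℝ)..a, (fderiv ℝ w (τ, r.1.2.1, r.1.2.2) (1,0,0))^2)
    = (a*b*c) * a * ∫ p in Ioc (0:ℝ) a ×ˢ (Ioc (0:ℝ) b ×ˢ Ioc (0:ℝ) c),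
        (fderiv ℝ w p (1,0,0))^2 := by
  have hcf : Continuous (fderiv ℝ w) := hw.continuous_fderiv one_ne_zero
  set T : Set (ℝ×ℝ) := Ioc (0:ℝ) b ×ˢ Ioc (0:ℝ) c with hT
  set S : Set (ℝ×ℝ×ℝ) := Ioc (0:ℝ) a ×ˢ T with hS
  have hg : Continuous fun q : ℝ × (ℝ×ℝ) => (fderiv ℝ w (q.1, q.2.1, q.2.2) (1,0,0))^2 := by
    exact (hcf.clm_apply continuous_const).pow 2
  set F : ℝ×ℝ → ℝ := fun z => ∫ τ in (0:ℝ)..a, (fderiv ℝ w (τ, z.1, z.2) (1,0,0))^2 with hF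
  have hFc : Continuous F := by
    exact intervalIntegral.continuous_parametric_intervalIntegral_of_continuous' (μ := volume)
      (f := fun (z : ℝ×ℝ) (τ : ℝ) => (fderiv ℝ w (τ, z.1, z.2) (1,0,0))^2)
      (by exact hg.comp continuous_swap) 0 a
  have hsub2 : T ⊆ Icc (0:ℝ) b ×ˢ Icc (0:ℝ) c :=
    Set.prod_mono Ioc_subset_Icc_self Ioc_subset_Icc_self
  calc ∫ r in S ×ˢ S, F r.1.2
      = ∫ p in S, ∫ _ in S, F p.2 :=
        set_split (intOn (hFc.comp (continuous_snd.comp continuous_fst))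
          (boxIcc_compact.prod boxIcc_compact) (Set.prod_mono box_sub box_sub))
    _ = ∫ p in S, (a*b*c) * F p.2 := by
        refine integral_congr_ae (Filter.Eventually.of_forall fun p => ?_)
        beta_reduce
        rw [setint_const, hS, hT, box_vol ha.le hb.le hc.le]
    _ = (a*b*c) * ∫ p in S, F p.2 := integral_const_mul _ _
    _ = (a*b*c) * ∫ _ in Ioc (0:ℝ) a, ∫ z in T, F z := by
        rw [hS]; congr 1
        exact set_split (intOn (hFc.comp continuous_snd)
          (isCompact_Icc.prod (isCompact_Icc.prod isCompact_Icc))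
          (Set.prod_mono Ioc_subset_Icc_self hsub2))
    _ = (a*b*c) * (a * ∫ z in T, F z) := by rw [setint_const, Ioc_vol ha.le]
    _ = (a*b*c) * (a * ∫ z in T, ∫ τ in Ioc (0:ℝ) a,
          (fderiv ℝ w (τ, z.1, z.2) (1,0,0))^2) := by
        congr 2
        apply integral_congr_ae; apply Filter.Eventually.of_forall; intro z
        exact intervalIntegral.integral_of_le ha.le
    _ = (a*b*c) * (a * ∫ τ in Ioc (0:ℝ) a, ∫ z in T,
          (fderiv ℝ w (τ, z.1, z.2) (1,0,0))^2) := by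
        congr 2
        exact set_swap (f := fun (z : ℝ×ℝ) (τ : ℝ) => (fderiv ℝ w (τ, z.1, z.2) (1,0,0))^2)
          (intOn (by exact hg.comp continuous_swap)
            ((isCompact_Icc.prod isCompact_Icc).prod isCompact_Icc)
            (Set.prod_mono hsub2 Ioc_subset_Icc_self))
    _ = (a*b*c) * a * ∫ p in S, (fderiv ℝ w p (1,0,0))^2 := by
        have hlast : ∫ p in Ioc (0:ℝ) a ×ˢ T, (fderiv ℝ w p (1,0,0))^2
            = ∫ τ in Ioc (0:ℝ) a, ∫ z in T, (fderiv ℝ w (τ, z.1, z.2) (1,0,0))^2 := by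
          exact set_split (intOn (by exact (hcf.clm_apply continuous_const).pow 2)
            (isCompact_Icc.prod (isCompact_Icc.prod isCompact_Icc))
            (Set.prod_mono Ioc_subset_Icc_self hsub2))
        rw [hS, hlast, ← mul_assoc]

lemma claim3 (ha : 0 < a) (hb : 0 < b) (hc : 0 < c)
    {w : ℝ×ℝ×ℝ → ℝ} (hw : ContDiff ℝ 1 w) :
    ∫ r in (Ioc (0:ℝ) a ×ˢ (Ioc (0:ℝ) b ×ˢ Ioc (0:ℝ) c)) ×ˢ
        (Ioc (0:ℝ) a ×ˢ (Ioc (0:ℝ) b ×ˢ Ioc (0:ℝ) c)),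
      (∫ η in (0:ℝ)..c, (fderiv ℝ w (r.2.1, r.2.2.1, η) (0,0,1))^2)
    = (a*b*c) * c * ∫ p in Ioc (0:ℝ) a ×ˢ (Ioc (0:ℝ) b ×ˢ Ioc (0:ℝ) c),
        (fderiv ℝ w p (0,0,1))^2 := by
  have hcf : Continuous (fderiv ℝ w) := hw.continuous_fderiv one_ne_zero
  set T : Set (ℝ×ℝ) := Ioc (0:ℝ) b ×ˢ Ioc (0:ℝ) c with hT
  set S : Set (ℝ×ℝ×ℝ) := Ioc (0:ℝ) a ×ˢ T with hS
  have hsub2 : T ⊆ Icc (0:ℝ) b ×ˢ Icc (0:ℝ) c :=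
    Set.prod_mono Ioc_subset_Icc_self Ioc_subset_Icc_self
  set F : ℝ×ℝ → ℝ := fun z => ∫ η in (0:ℝ)..c, (fderiv ℝ w (z.1, z.2, η) (0,0,1))^2 with hF
  have hFc : Continuous F := by
    exact intervalIntegral.continuous_parametric_intervalIntegral_of_continuous' (μ := volume)
      (f := fun (z : ℝ×ℝ) (η : ℝ) => (fderiv ℝ w (z.1, z.2, η) (0,0,1))^2)
      (by exact ((hcf.comp ((continuous_fst.comp continuous_fst).prodMk
        ((continuous_snd.comp continuous_fst).prodMk continuous_snd))).clm_apply
        continuous_const).pow 2) 0 c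
  calc ∫ r in S ×ˢ S, F (r.2.1, r.2.2.1)
      = ∫ _ in S, ∫ q in S, F (q.1, q.2.1) :=
        set_split (intOn (hFc.comp ((continuous_fst.comp continuous_snd).prodMk
          (continuous_fst.comp (continuous_snd.comp continuous_snd))))
          (boxIcc_compact.prod boxIcc_compact) (Set.prod_mono box_sub box_sub))
    _ = (a*b*c) * ∫ q in S, F (q.1, q.2.1) := by
        rw [setint_const, hS, hT, box_vol ha.le hb.le hc.le]
    _ = (a*b*c) * ∫ s in Ioc (0:ℝ) a, ∫ z in T, F (s, z.1) := by
        rw [hS]; congr 1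
        exact set_split (intOn (hFc.comp (continuous_fst.prodMk
          (continuous_fst.comp continuous_snd)))
          (isCompact_Icc.prod (isCompact_Icc.prod isCompact_Icc))
          (Set.prod_mono Ioc_subset_Icc_self hsub2))
    _ = (a*b*c) * ∫ s in Ioc (0:ℝ) a, c * ∫ x in Ioc (0:ℝ) b, F (s, x) := by
        congr 1
        refine integral_congr_ae (Filter.Eventually.of_forall fun s => ?_)
        beta_reduce
        rw [hT, set_split (f := fun z : ℝ×ℝ => F (s, z.1))
          (intOn (by exact hFc.comp (continuous_const.prodMk continuous_fst))
          (isCompact_Icc.prod isCompact_Icc) hsub2)]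
        calc ∫ x in Ioc (0:ℝ) b, ∫ _ in Ioc (0:ℝ) c, F (s, x)
            = ∫ x in Ioc (0:ℝ) b, c * F (s, x) := by
              refine integral_congr_ae (Filter.Eventually.of_forall fun x => ?_)
              beta_reduce
              rw [setint_const, Ioc_vol hc.le]
          _ = c * ∫ x in Ioc (0:ℝ) b, F (s, x) := integral_const_mul _ _
    _ = (a*b*c) * (c * ∫ s in Ioc (0:ℝ) a, ∫ x in Ioc (0:ℝ) b, F (s, x)) := by
        rw [integral_const_mul]
    _ = (a*b*c) * (c * ∫ s in Ioc (0:ℝ) a, ∫ z in T,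
          (fderiv ℝ w (s, z.1, z.2) (0,0,1))^2) := by
        congr 2
        refine integral_congr_ae (Filter.Eventually.of_forall fun s => ?_)
        beta_reduce
        rw [hT, set_split (f := fun z : ℝ×ℝ => (fderiv ℝ w (s, z.1, z.2) (0,0,1))^2)
          (intOn (by exact ((hcf.comp (continuous_const.prodMk
          (continuous_fst.prodMk continuous_snd))).clm_apply continuous_const).pow 2)
          (isCompact_Icc.prod isCompact_Icc) hsub2)]
        refine integral_congr_ae (Filter.Eventually.of_forall fun x => ?_)
        beta_reduce
        exact intervalIntegral.integral_of_le hc.le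
    _ = (a*b*c) * c * ∫ p in S, (fderiv ℝ w p (0,0,1))^2 := by
        have hlast : ∫ p in Ioc (0:ℝ) a ×ˢ T, (fderiv ℝ w p (0,0,1))^2
            = ∫ s in Ioc (0:ℝ) a, ∫ z in T, (fderiv ℝ w (s, z.1, z.2) (0,0,1))^2 := by
          exact set_split (intOn (by exact (hcf.clm_apply continuous_const).pow 2)
            (isCompact_Icc.prod (isCompact_Icc.prod isCompact_Icc))
            (Set.prod_mono Ioc_subset_Icc_self hsub2))
        rw [hS, hlast, ← mul_assoc]

lemma claim2 (ha : 0 < a) (hb : 0 < b) (hc : 0 < c)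
    {w : ℝ×ℝ×ℝ → ℝ} (hw : ContDiff ℝ 1 w) :
    ∫ r in (Ioc (0:ℝ) a ×ˢ (Ioc (0:ℝ) b ×ˢ Ioc (0:ℝ) c)) ×ˢ
        (Ioc (0:ℝ) a ×ˢ (Ioc (0:ℝ) b ×ˢ Ioc (0:ℝ) c)),
      (∫ ξ in (0:ℝ)..b, (fderiv ℝ w (r.2.1, ξ, r.1.2.2) (0,1,0))^2)
    = (a*b*c) * b * ∫ p in Ioc (0:ℝ) a ×ˢ (Ioc (0:ℝ) b ×ˢ Ioc (0:ℝ) c),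
        (fderiv ℝ w p (0,1,0))^2 := by
  have hcf : Continuous (fderiv ℝ w) := hw.continuous_fderiv one_ne_zero
  set T : Set (ℝ×ℝ) := Ioc (0:ℝ) b ×ˢ Ioc (0:ℝ) c with hT
  set S : Set (ℝ×ℝ×ℝ) := Ioc (0:ℝ) a ×ˢ T with hS
  have hsub2 : T ⊆ Icc (0:ℝ) b ×ˢ Icc (0:ℝ) c :=
    Set.prod_mono Ioc_subset_Icc_self Ioc_subset_Icc_self
  set F : ℝ×ℝ → ℝ := fun z => ∫ ξ in (0:ℝ)..b, (fderiv ℝ w (z.1, ξ, z.2) (0,1,0))^2 with hF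
  have hFc : Continuous F := by
    exact intervalIntegral.continuous_parametric_intervalIntegral_of_continuous' (μ := volume)
      (f := fun (z : ℝ×ℝ) (ξ : ℝ) => (fderiv ℝ w (z.1, ξ, z.2) (0,1,0))^2)
      (by exact ((hcf.comp ((continuous_fst.comp continuous_fst).prodMk
        (continuous_snd.prodMk (continuous_snd.comp continuous_fst)))).clm_apply
        continuous_const).pow 2) 0 b
  set H : ℝ → ℝ := fun y => ∫ s in (0:ℝ)..a, F (s, y) with hH
  have hHc : Continuous H := by
    exact intervalIntegral.continuous_parametric_intervalIntegral_of_continuous' (μ := volume)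
      (f := fun (y : ℝ) (s : ℝ) => F (s, y))
      (by exact hFc.comp (continuous_snd.prodMk continuous_fst)) 0 a
  have key2 : ∫ y in Ioc (0:ℝ) c, H y = ∫ p in S, (fderiv ℝ w p (0,1,0))^2 := by
    calc ∫ y in Ioc (0:ℝ) c, H y
        = ∫ y in Ioc (0:ℝ) c, ∫ s in Ioc (0:ℝ) a, F (s, y) := by
          refine integral_congr_ae (Filter.Eventually.of_forall fun y => ?_)
          beta_reduce
          rw [hH]; beta_reduce
          exact intervalIntegral.integral_of_le ha.le
      _ = ∫ s in Ioc (0:ℝ) a, ∫ y in Ioc (0:ℝ) c, F (s, y) :=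
          set_swap (f := fun (y s : ℝ) => F (s, y))
            (intOn (by exact hFc.comp (continuous_snd.prodMk continuous_fst))
              (isCompact_Icc.prod isCompact_Icc)
              (Set.prod_mono Ioc_subset_Icc_self Ioc_subset_Icc_self))
      _ = ∫ s in Ioc (0:ℝ) a, ∫ ξ in Ioc (0:ℝ) b, ∫ y in Ioc (0:ℝ) c,
            (fderiv ℝ w (s, ξ, y) (0,1,0))^2 := by
          refine integral_congr_ae (Filter.Eventually.of_forall fun s => ?_)
          beta_reduce
          calc ∫ y in Ioc (0:ℝ) c, F (s, y)
              = ∫ y in Ioc (0:ℝ) c, ∫ ξ in Ioc (0:ℝ) b, (fderiv ℝ w (s, ξ, y) (0,1,0))^2 := by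
                refine integral_congr_ae (Filter.Eventually.of_forall fun y => ?_)
                beta_reduce
                exact intervalIntegral.integral_of_le hb.le
            _ = ∫ ξ in Ioc (0:ℝ) b, ∫ y in Ioc (0:ℝ) c, (fderiv ℝ w (s, ξ, y) (0,1,0))^2 :=
                set_swap (f := fun (y ξ : ℝ) => (fderiv ℝ w (s, ξ, y) (0,1,0))^2)
                  (intOn (by exact ((hcf.comp (continuous_const.prodMk
                    (continuous_snd.prodMk continuous_fst))).clm_apply
                    continuous_const).pow 2)
                    (isCompact_Icc.prod isCompact_Icc)
                    (Set.prod_mono Ioc_subset_Icc_self Ioc_subset_Icc_self))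
      _ = ∫ s in Ioc (0:ℝ) a, ∫ z in T, (fderiv ℝ w (s, z.1, z.2) (0,1,0))^2 := by
          refine integral_congr_ae (Filter.Eventually.of_forall fun s => ?_)
          beta_reduce
          rw [hT, set_split (f := fun z : ℝ×ℝ => (fderiv ℝ w (s, z.1, z.2) (0,1,0))^2)
            (intOn (by exact ((hcf.comp (continuous_const.prodMk
              (continuous_fst.prodMk continuous_snd))).clm_apply continuous_const).pow 2)
            (isCompact_Icc.prod isCompact_Icc) hsub2)]
      _ = ∫ p in S, (fderiv ℝ w p (0,1,0))^2 := by
          have hlast : ∫ p in Ioc (0:ℝ) a ×ˢ T, (fderiv ℝ w p (0,1,0))^2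
              = ∫ s in Ioc (0:ℝ) a, ∫ z in T, (fderiv ℝ w (s, z.1, z.2) (0,1,0))^2 := by
            exact set_split (intOn (by exact (hcf.clm_apply continuous_const).pow 2)
              (isCompact_Icc.prod (isCompact_Icc.prod isCompact_Icc))
              (Set.prod_mono Ioc_subset_Icc_self hsub2))
          rw [hS, hlast]
  calc ∫ r in S ×ˢ S, F (r.2.1, r.1.2.2)
      = ∫ p in S, ∫ q in S, F (q.1, p.2.2) :=
        set_split (intOn (by exact hFc.comp ((continuous_fst.comp continuous_snd).prodMk
          (continuous_snd.comp (continuous_snd.comp continuous_fst))))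
          (boxIcc_compact.prod boxIcc_compact) (Set.prod_mono box_sub box_sub))
    _ = ∫ p in S, (b*c) * H p.2.2 := by
        refine integral_congr_ae (Filter.Eventually.of_forall fun p => ?_)
        beta_reduce
        rw [hS, set_split (f := fun q : ℝ×ℝ×ℝ => F (q.1, p.2.2))
          (intOn (by exact hFc.comp (continuous_fst.prodMk continuous_const))
          (isCompact_Icc.prod (isCompact_Icc.prod isCompact_Icc))
          (Set.prod_mono Ioc_subset_Icc_self hsub2))]
        calc ∫ s in Ioc (0:ℝ) a, ∫ _ in T, F (s, p.2.2)
            = ∫ s in Ioc (0:ℝ) a, (b*c) * F (s, p.2.2) := by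
              refine integral_congr_ae (Filter.Eventually.of_forall fun s => ?_)
              beta_reduce
              rw [setint_const, hT, box2_vol hb.le hc.le]
          _ = (b*c) * ∫ s in Ioc (0:ℝ) a, F (s, p.2.2) := integral_const_mul _ _
          _ = (b*c) * H p.2.2 := by
              rw [hH]; beta_reduce
              rw [intervalIntegral.integral_of_le ha.le]
    _ = (b*c) * ∫ p in S, H p.2.2 := integral_const_mul _ _
    _ = (b*c) * ∫ _ in Ioc (0:ℝ) a, ∫ z in T, H z.2 := by
        rw [hS]; congr 1
        exact set_split (intOn (by exact hHc.comp (continuous_snd.comp continuous_snd))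
          (isCompact_Icc.prod (isCompact_Icc.prod isCompact_Icc))
          (Set.prod_mono Ioc_subset_Icc_self hsub2))
    _ = (b*c) * (a * ∫ z in T, H z.2) := by rw [setint_const, Ioc_vol ha.le]
    _ = (b*c) * (a * ∫ _ in Ioc (0:ℝ) b, ∫ y in Ioc (0:ℝ) c, H y) := by
        congr 2
        rw [hT]
        exact set_split (f := fun z : ℝ×ℝ => H z.2)
          (intOn (by exact hHc.comp continuous_snd)
            (isCompact_Icc.prod isCompact_Icc) hsub2)
    _ = (b*c) * (a * (b * ∫ y in Ioc (0:ℝ) c, H y)) := by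
        rw [setint_const, Ioc_vol hb.le]
    _ = (a*b*c) * b * ∫ p in S, (fderiv ℝ w p (0,1,0))^2 := by
        rw [key2]; ring
end claims

lemma poincare {a b c : ℝ} (ha : 0 < a) (hb : 0 < b) (hc : 0 < c)
    {w : ℝ×ℝ×ℝ → ℝ} (hw : ContDiff ℝ 1 w) :
    ∫ p in Ioc (0:ℝ) a ×ˢ (Ioc (0:ℝ) b ×ˢ Ioc (0:ℝ) c),
        (w p - (a*b*c)⁻¹ * ∫ q in Ioc (0:ℝ) a ×ˢ (Ioc (0:ℝ) b ×ˢ Ioc (0:ℝ) c), w q)^2 ≤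
      3 * (a^2 * (∫ p in Ioc (0:ℝ) a ×ˢ (Ioc (0:ℝ) b ×ˢ Ioc (0:ℝ) c),
            (fderiv ℝ w p (1,0,0))^2)
        + b^2 * (∫ p in Ioc (0:ℝ) a ×ˢ (Ioc (0:ℝ) b ×ˢ Ioc (0:ℝ) c),
            (fderiv ℝ w p (0,1,0))^2)
        + c^2 * (∫ p in Ioc (0:ℝ) a ×ˢ (Ioc (0:ℝ) b ×ˢ Ioc (0:ℝ) c),
            (fderiv ℝ w p (0,0,1))^2)) := by
  have hwc : Continuous w := hw.continuous
  have hcf : Continuous (fderiv ℝ w) := hw.continuous_fderiv one_ne_zero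
  set Sb : Set (ℝ×ℝ×ℝ) := Ioc (0:ℝ) a ×ˢ (Ioc (0:ℝ) b ×ˢ Ioc (0:ℝ) c) with hSb
  haveI : IsFiniteMeasure (volume.restrict Sb) := finRestrict box_vol_lt_top
  have measS : MeasurableSet Sb :=
    (measurableSet_Ioc.prod (measurableSet_Ioc.prod measurableSet_Ioc))
  set I1 : ℝ := ∫ q in Sb, w q with hI1def
  set I2 : ℝ := ∫ q in Sb, (w q)^2 with hI2def
  set P1 : ℝ := ∫ p in Sb, (fderiv ℝ w p (1,0,0))^2 with hP1def
  set P2 : ℝ := ∫ p in Sb, (fderiv ℝ w p (0,1,0))^2 with hP2def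
  set P3 : ℝ := ∫ p in Sb, (fderiv ℝ w p (0,0,1))^2 with hP3def
  set V : ℝ := a*b*c with hVdef
  have hVpos : 0 < V := by positivity
  have hIw : IntegrableOn w Sb := box_intOn hwc
  have hIw2 : IntegrableOn (fun p => (w p)^2) Sb := box_intOn (hwc.pow 2)
  have hVol : (volume Sb).toReal = V := box_vol ha.le hb.le hc.le
  set L : ℝ := ∫ p in Sb, (w p - (a*b*c)⁻¹ * I1)^2 with hLdef
  have hLnn : 0 ≤ L := setIntegral_nonneg measS fun x _ => sq_nonneg _
  have hI2nn : 0 ≤ I2 := setIntegral_nonneg measS fun x _ => sq_nonneg _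
  have hP1nn : 0 ≤ P1 := setIntegral_nonneg measS fun x _ => sq_nonneg _
  have hP2nn : 0 ≤ P2 := setIntegral_nonneg measS fun x _ => sq_nonneg _
  have hP3nn : 0 ≤ P3 := setIntegral_nonneg measS fun x _ => sq_nonneg _
  have hLHS : L = I2 - 2*((a*b*c)⁻¹*I1)*I1 + ((a*b*c)⁻¹*I1)^2*V := by
    have := expand_sq (volume.restrict Sb) hIw hIw2 ((a*b*c)⁻¹ * I1)
    rwa [Measure.restrict_apply_univ, hVol, ← hI1def, ← hI2def, ← hLdef] at this
  have hVX : V * L = V*I2 - I1^2 := by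
    rw [hLHS, hVdef]; field_simp; ring
  -- D computation
  set D : ℝ := ∫ r in Sb ×ˢ Sb, (w r.1 - w r.2)^2 with hDdef
  have hDcont : Continuous fun r : (ℝ×ℝ×ℝ)×(ℝ×ℝ×ℝ) => (w r.1 - w r.2)^2 :=
    ((hwc.comp continuous_fst).sub (hwc.comp continuous_snd)).pow 2
  have hDsplit : D = ∫ p in Sb, ∫ q in Sb, (w p - w q)^2 := set_split (box2_intOn hDcont)
  have hinner : ∀ p : ℝ×ℝ×ℝ, ∫ q in Sb, (w p - w q)^2 = I2 - 2*(w p)*I1 + (w p)^2*V := by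
    intro p
    have e1 : ∫ q in Sb, (w p - w q)^2 = ∫ q in Sb, (w q - w p)^2 :=
      integral_congr_ae (Filter.Eventually.of_forall fun q => by ring)
    rw [e1]
    have := expand_sq (volume.restrict Sb) hIw hIw2 (w p)
    rwa [Measure.restrict_apply_univ, hVol, ← hI1def, ← hI2def] at this
  have hDval : D = 2*(V*I2 - I1^2) := by
    rw [hDsplit]
    calc ∫ p in Sb, ∫ q in Sb, (w p - w q)^2
        = ∫ p in Sb, ((I2 - 2*I1*w p) + V*(w p)^2) := by
          refine integral_congr_ae (Filter.Eventually.of_forall fun p => ?_)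
          beta_reduce
          rw [hinner p]; ring
      _ = 2*(V*I2 - I1^2) := by
          have h1 : Integrable (fun p => I2 - 2*I1*w p) (volume.restrict Sb) :=
            (integrable_const _).sub (hIw.const_mul _)
          have h2 : Integrable (fun p => V*(w p)^2) (volume.restrict Sb) := hIw2.const_mul _
          rw [integral_add h1 h2, integral_sub (integrable_const _) (hIw.const_mul _),
            integral_const_mul, integral_const_mul, integral_const,
            measureReal_restrict_apply_univ, measureReal_def, hVol, smul_eq_mul, ← hI1def, ← hI2def]
          ring
  have hCS : I1^2 ≤ V * I2 := by
    have h1 := cs (volume.restrict Sb) (memL2 hwc boxIcc_compact box_sub)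
      (memLp_const (1:ℝ))
    simp only [mul_one, one_pow] at h1
    have hone : ∫ _ in Sb, (1:ℝ) = V := by rw [setint_const, hVol, mul_one]
    rw [hone, ← hI1def, ← hI2def] at h1
    calc I1^2 = |I1|^2 := (sq_abs _).symm
      _ ≤ (Real.sqrt I2 * Real.sqrt V)^2 := pow_le_pow_left₀ (abs_nonneg _) h1 2
      _ = I2 * V := by rw [mul_pow, Real.sq_sqrt hI2nn, Real.sq_sqrt hVpos.le]
      _ = V * I2 := mul_comm _ _
  -- pointwise bound and Fubini
  set R : (ℝ×ℝ×ℝ)×(ℝ×ℝ×ℝ) → ℝ := fun r =>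
    3*(a * (∫ τ in (0:ℝ)..a, (fderiv ℝ w (τ, r.1.2.1, r.1.2.2) (1,0,0))^2)
      + b * (∫ ξ in (0:ℝ)..b, (fderiv ℝ w (r.2.1, ξ, r.1.2.2) (0,1,0))^2)
      + c * (∫ η in (0:ℝ)..c, (fderiv ℝ w (r.2.1, r.2.2.1, η) (0,0,1))^2)) with hRdef
  have c1 : Continuous fun r : (ℝ×ℝ×ℝ)×(ℝ×ℝ×ℝ) =>
      ∫ τ in (0:ℝ)..a, (fderiv ℝ w (τ, r.1.2.1, r.1.2.2) (1,0,0))^2 := by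
    exact intervalIntegral.continuous_parametric_intervalIntegral_of_continuous' (μ := volume)
      (f := fun (r : (ℝ×ℝ×ℝ)×(ℝ×ℝ×ℝ)) (τ : ℝ) => (fderiv ℝ w (τ, r.1.2.1, r.1.2.2) (1,0,0))^2)
      (by exact ((hcf.comp (continuous_snd.prodMk
        (continuous_fst.fst.snd.fst.prodMk continuous_fst.fst.snd.snd))).clm_apply
        continuous_const).pow 2) 0 a
  have c2 : Continuous fun r : (ℝ×ℝ×ℝ)×(ℝ×ℝ×ℝ) =>
      ∫ ξ in (0:ℝ)..b, (fderiv ℝ w (r.2.1, ξ, r.1.2.2) (0,1,0))^2 := by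
    exact intervalIntegral.continuous_parametric_intervalIntegral_of_continuous' (μ := volume)
      (f := fun (r : (ℝ×ℝ×ℝ)×(ℝ×ℝ×ℝ)) (ξ : ℝ) => (fderiv ℝ w (r.2.1, ξ, r.1.2.2) (0,1,0))^2)
      (by exact ((hcf.comp (continuous_fst.snd.fst.prodMk
        (continuous_snd.prodMk continuous_fst.fst.snd.snd))).clm_apply
        continuous_const).pow 2) 0 b
  have c3 : Continuous fun r : (ℝ×ℝ×ℝ)×(ℝ×ℝ×ℝ) =>
      ∫ η in (0:ℝ)..c, (fderiv ℝ w (r.2.1, r.2.2.1, η) (0,0,1))^2 := by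
    exact intervalIntegral.continuous_parametric_intervalIntegral_of_continuous' (μ := volume)
      (f := fun (r : (ℝ×ℝ×ℝ)×(ℝ×ℝ×ℝ)) (η : ℝ) => (fderiv ℝ w (r.2.1, r.2.2.1, η) (0,0,1))^2)
      (by exact ((hcf.comp (continuous_fst.snd.fst.prodMk
        (continuous_fst.snd.snd.fst.prodMk continuous_snd))).clm_apply
        continuous_const).pow 2) 0 c
  have hRc : Continuous R := by
    rw [hRdef]
    exact continuous_const.mul (((continuous_const.mul c1).add
      (continuous_const.mul c2)).add (continuous_const.mul c3))
  have hpt : ∀ r ∈ Sb ×ˢ Sb, (w r.1 - w r.2)^2 ≤ R r := by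
    intro r hr
    rw [Set.mem_prod] at hr
    rw [hRdef]; beta_reduce
    rw [intervalIntegral.integral_of_le ha.le, intervalIntegral.integral_of_le hb.le,
      intervalIntegral.integral_of_le hc.le]
    exact pointwise_bd hw hr.1 hr.2
  have hDle : D ≤ ∫ r in Sb ×ˢ Sb, R r :=
    setIntegral_mono_on (box2_intOn hDcont) (box2_intOn hRc) (measS.prod measS) hpt
  have hRval : ∫ r in Sb ×ˢ Sb, R r = 3*(V*(a^2*P1) + V*(b^2*P2) + V*(c^2*P3)) := by
    have i1 := box2_intOn (a := a) (b := b) (c := c) c1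
    have i2 := box2_intOn (a := a) (b := b) (c := c) c2
    have i3 := box2_intOn (a := a) (b := b) (c := c) c3
    have j1 : Integrable (fun r : (ℝ×ℝ×ℝ)×(ℝ×ℝ×ℝ) =>
        a * ∫ τ in (0:ℝ)..a, (fderiv ℝ w (τ, r.1.2.1, r.1.2.2) (1,0,0))^2)
        (volume.restrict (Sb ×ˢ Sb)) := i1.const_mul a
    have j2 : Integrable (fun r : (ℝ×ℝ×ℝ)×(ℝ×ℝ×ℝ) =>
        b * ∫ ξ in (0:ℝ)..b, (fderiv ℝ w (r.2.1, ξ, r.1.2.2) (0,1,0))^2)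
        (volume.restrict (Sb ×ˢ Sb)) := i2.const_mul b
    have j3 : Integrable (fun r : (ℝ×ℝ×ℝ)×(ℝ×ℝ×ℝ) =>
        c * ∫ η in (0:ℝ)..c, (fderiv ℝ w (r.2.1, r.2.2.1, η) (0,0,1))^2)
        (volume.restrict (Sb ×ˢ Sb)) := i3.const_mul c
    have j12 : Integrable (fun r : (ℝ×ℝ×ℝ)×(ℝ×ℝ×ℝ) =>
        a * (∫ τ in (0:ℝ)..a, (fderiv ℝ w (τ, r.1.2.1, r.1.2.2) (1,0,0))^2)
        + b * ∫ ξ in (0:ℝ)..b, (fderiv ℝ w (r.2.1, ξ, r.1.2.2) (0,1,0))^2)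
        (volume.restrict (Sb ×ˢ Sb)) := j1.add j2
    rw [hRdef]
    rw [integral_const_mul, integral_add j12 j3, integral_add j1 j2,
      integral_const_mul, integral_const_mul, integral_const_mul]
    rw [hSb, claim1 ha hb hc hw, claim2 ha hb hc hw, claim3 ha hb hc hw,
      ← hP1def, ← hP2def, ← hP3def]
    ring
  -- combine
  have hfin : 2*(V*L) ≤ 3*(V*(a^2*P1) + V*(b^2*P2) + V*(c^2*P3)) := by
    rw [hVX]; rw [← hDval]; exact hDle.trans (le_of_eq hRval)
  have hgoal : L ≤ 3*(a^2*P1 + b^2*P2 + c^2*P3) := by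
    nlinarith [hVpos, hLnn, hfin]
  exact hgoal

lemma sqrt_add3 {x y z : ℝ} (hx : 0 ≤ x) (hy : 0 ≤ y) (hz : 0 ≤ z) :
    Real.sqrt (x+y+z) ≤ Real.sqrt x + Real.sqrt y + Real.sqrt z := by
  calc Real.sqrt (x+y+z) ≤ Real.sqrt ((Real.sqrt x + Real.sqrt y + Real.sqrt z)^2) := by
        apply Real.sqrt_le_sqrt
        nlinarith [Real.sq_sqrt hx, Real.sq_sqrt hy, Real.sq_sqrt hz,
          Real.sqrt_nonneg x, Real.sqrt_nonneg y, Real.sqrt_nonneg z,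
          mul_nonneg (Real.sqrt_nonneg x) (Real.sqrt_nonneg y),
          mul_nonneg (Real.sqrt_nonneg x) (Real.sqrt_nonneg z),
          mul_nonneg (Real.sqrt_nonneg y) (Real.sqrt_nonneg z)]
    _ = _ := Real.sqrt_sq (by positivity)

set_option maxHeartbeats 1000000 in
theorem stmt_12 :
    ∃ C : ℝ, 0 < C ∧ ∀ Δt h₁ h₂ : ℝ, 0 < Δt → 0 < h₁ → 0 < h₂ →
      ∀ u v : ℝ × ℝ × ℝ → ℝ, ContDiff ℝ 1 u → ContDiff ℝ 1 v →
      |∫ p in Set.Ioc 0 Δt ×ˢ (Set.Ioc 0 h₁ ×ˢ Set.Ioc 0 h₂),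
          (u p - (Δt * h₁ * h₂)⁻¹ *
            (∫ q in Set.Ioc 0 Δt ×ˢ (Set.Ioc 0 h₁ ×ˢ Set.Ioc 0 h₂), u q)) * v p| ≤
        C * max (max h₁ h₂) Δt *
          (Δt * Real.sqrt (∫ p in Set.Ioc 0 Δt ×ˢ (Set.Ioc 0 h₁ ×ˢ Set.Ioc 0 h₂),
                (fderiv ℝ u p (1, 0, 0))^2)
            + h₁ * Real.sqrt (∫ p in Set.Ioc 0 Δt ×ˢ (Set.Ioc 0 h₁ ×ˢ Set.Ioc 0 h₂),
                (fderiv ℝ u p (0, 1, 0))^2)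
            + h₂ * Real.sqrt (∫ p in Set.Ioc 0 Δt ×ˢ (Set.Ioc 0 h₁ ×ˢ Set.Ioc 0 h₂),
                (fderiv ℝ u p (0, 0, 1))^2)) *
          Real.sqrt ((∫ p in Set.Ioc 0 Δt ×ˢ (Set.Ioc 0 h₁ ×ˢ Set.Ioc 0 h₂), (v p)^2)
            + ∫ p in Set.Ioc 0 Δt ×ˢ (Set.Ioc 0 h₁ ×ˢ Set.Ioc 0 h₂), ‖fderiv ℝ v p‖^2) := by
  refine ⟨9, by norm_num, ?_⟩
  intro Δt h₁ h₂ hΔ hh1 hh2 u v hu hv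
  have huc : Continuous u := hu.continuous
  have hvc : Continuous v := hv.continuous
  set Sb : Set (ℝ×ℝ×ℝ) := Ioc (0:ℝ) Δt ×ˢ (Ioc (0:ℝ) h₁ ×ˢ Ioc (0:ℝ) h₂) with hSb
  haveI : IsFiniteMeasure (volume.restrict Sb) := finRestrict box_vol_lt_top
  have measS : MeasurableSet Sb :=
    (measurableSet_Ioc.prod (measurableSet_Ioc.prod measurableSet_Ioc))
  set M : ℝ := max (max h₁ h₂) Δt with hM
  have hMpos : 0 < M := lt_of_lt_of_le hΔ (le_max_right _ _)
  have hMD : Δt ≤ M := le_max_right _ _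
  have hM1 : h₁ ≤ M := le_trans (le_max_left _ _) (le_max_left _ _)
  have hM2 : h₂ ≤ M := le_trans (le_max_right _ _) (le_max_left _ _)
  set mu : ℝ := (Δt * h₁ * h₂)⁻¹ * ∫ q in Sb, u q with hmu
  set mv : ℝ := (Δt * h₁ * h₂)⁻¹ * ∫ q in Sb, v q with hmv
  have hVol : (volume Sb).toReal = Δt * h₁ * h₂ := box_vol hΔ.le hh1.le hh2.le
  -- step 0: replace v by v - mv
  have hzero : ∫ p in Sb, (u p - mu) = 0 := by
    rw [integral_sub (box_intOn huc) (integrable_const _), integral_const,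
      measureReal_restrict_apply_univ, measureReal_def, hVol, smul_eq_mul, hmu]
    field_simp
    simp [hSb]
  have hstep0 : ∫ p in Sb, (u p - mu) * v p = ∫ p in Sb, (u p - mu) * (v p - mv) := by
    have hA : Integrable (fun p => (u p - mu)*(v p - mv)) (volume.restrict Sb) :=
      box_intOn ((huc.sub continuous_const).mul (hvc.sub continuous_const))
    have hB : Integrable (fun p => mv*(u p - mu)) (volume.restrict Sb) :=
      box_intOn (continuous_const.mul (huc.sub continuous_const))
    calc ∫ p in Sb, (u p - mu) * v p
        = ∫ p in Sb, ((u p - mu)*(v p - mv) + mv*(u p - mu)) :=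
          integral_congr_ae (Filter.Eventually.of_forall fun p => by ring)
      _ = (∫ p in Sb, (u p - mu)*(v p - mv)) + ∫ p in Sb, mv*(u p - mu) :=
          integral_add hA hB
      _ = (∫ p in Sb, (u p - mu)*(v p - mv)) + mv * ∫ p in Sb, (u p - mu) := by
          rw [integral_const_mul]
      _ = ∫ p in Sb, (u p - mu)*(v p - mv) := by rw [hzero, mul_zero, add_zero]
  -- Cauchy-Schwarz
  have hcs : |∫ p in Sb, (u p - mu) * (v p - mv)| ≤
      Real.sqrt (∫ p in Sb, (u p - mu)^2) * Real.sqrt (∫ p in Sb, (v p - mv)^2) :=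
    cs (volume.restrict Sb)
      (memL2 (f := fun p => u p - mu) (by exact huc.sub continuous_const)
        boxIcc_compact box_sub)
      (memL2 (f := fun p => v p - mv) (by exact hvc.sub continuous_const)
        boxIcc_compact box_sub)
  -- Poincare for u and v
  have hPu := poincare hΔ hh1 hh2 hu
  have hPv := poincare hΔ hh1 hh2 hv
  rw [← hSb, ← hmu] at hPu
  rw [← hSb, ← hmv] at hPv
  set P1 : ℝ := ∫ p in Sb, (fderiv ℝ u p (1,0,0))^2 with hP1
  set P2 : ℝ := ∫ p in Sb, (fderiv ℝ u p (0,1,0))^2 with hP2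
  set P3 : ℝ := ∫ p in Sb, (fderiv ℝ u p (0,0,1))^2 with hP3
  set Q1 : ℝ := ∫ p in Sb, (fderiv ℝ v p (1,0,0))^2 with hQ1
  set Q2 : ℝ := ∫ p in Sb, (fderiv ℝ v p (0,1,0))^2 with hQ2
  set Q3 : ℝ := ∫ p in Sb, (fderiv ℝ v p (0,0,1))^2 with hQ3
  set NV : ℝ := ∫ p in Sb, ‖fderiv ℝ v p‖^2 with hNV
  set V2 : ℝ := ∫ p in Sb, (v p)^2 with hV2
  have hP1nn : 0 ≤ P1 := setIntegral_nonneg measS fun x _ => sq_nonneg _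
  have hP2nn : 0 ≤ P2 := setIntegral_nonneg measS fun x _ => sq_nonneg _
  have hP3nn : 0 ≤ P3 := setIntegral_nonneg measS fun x _ => sq_nonneg _
  have hQ1nn : 0 ≤ Q1 := setIntegral_nonneg measS fun x _ => sq_nonneg _
  have hQ2nn : 0 ≤ Q2 := setIntegral_nonneg measS fun x _ => sq_nonneg _
  have hQ3nn : 0 ≤ Q3 := setIntegral_nonneg measS fun x _ => sq_nonneg _
  have hNVnn : 0 ≤ NV := setIntegral_nonneg measS fun x _ => sq_nonneg _
  have hV2nn : 0 ≤ V2 := setIntegral_nonneg measS fun x _ => sq_nonneg _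
  -- directional derivatives of v bounded by operator norm
  have hcfv : Continuous (fderiv ℝ v) := hv.continuous_fderiv one_ne_zero
  have hQle : ∀ e : ℝ×ℝ×ℝ, ‖e‖ ≤ 1 →
      (∫ p in Sb, (fderiv ℝ v p e)^2) ≤ NV := by
    intro e he
    apply setIntegral_mono_on (box_intOn (by exact (hcfv.clm_apply continuous_const).pow 2))
      (box_intOn (by exact hcfv.norm.pow 2)) measS
    intro p _
    calc (fderiv ℝ v p e)^2 = |fderiv ℝ v p e|^2 := (sq_abs _).symm
      _ ≤ ‖fderiv ℝ v p‖^2 := by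
          apply pow_le_pow_left₀ (abs_nonneg _)
          calc |fderiv ℝ v p e| = ‖fderiv ℝ v p e‖ := (Real.norm_eq_abs _).symm
            _ ≤ ‖fderiv ℝ v p‖ * ‖e‖ := (fderiv ℝ v p).le_opNorm e
            _ ≤ ‖fderiv ℝ v p‖ * 1 := by
                exact mul_le_mul_of_nonneg_left he (norm_nonneg _)
            _ = ‖fderiv ℝ v p‖ := mul_one _
  have he1 : ‖((1:ℝ),(0:ℝ),(0:ℝ))‖ ≤ 1 := by
    rw [Prod.norm_def, Prod.norm_def]; simp
  have he2 : ‖((0:ℝ),(1:ℝ),(0:ℝ))‖ ≤ 1 := by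
    rw [Prod.norm_def, Prod.norm_def]; simp
  have he3 : ‖((0:ℝ),(0:ℝ),(1:ℝ))‖ ≤ 1 := by
    rw [Prod.norm_def, Prod.norm_def]; simp
  have hQ1le : Q1 ≤ NV := hQle _ he1
  have hQ2le : Q2 ≤ NV := hQle _ he2
  have hQ3le : Q3 ≤ NV := hQle _ he3
  -- bound the u factor
  set Su : ℝ := Δt * Real.sqrt P1 + h₁ * Real.sqrt P2 + h₂ * Real.sqrt P3 with hSu
  have hSunn : 0 ≤ Su := by positivity
  have hFu : Real.sqrt (∫ p in Sb, (u p - mu)^2) ≤ Real.sqrt 3 * Su := by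
    calc Real.sqrt (∫ p in Sb, (u p - mu)^2)
        ≤ Real.sqrt (3 * (Δt^2*P1 + h₁^2*P2 + h₂^2*P3)) := Real.sqrt_le_sqrt hPu
      _ = Real.sqrt 3 * Real.sqrt (Δt^2*P1 + h₁^2*P2 + h₂^2*P3) := by
          rw [Real.sqrt_mul (by norm_num)]
      _ ≤ Real.sqrt 3 * (Real.sqrt (Δt^2*P1) + Real.sqrt (h₁^2*P2) + Real.sqrt (h₂^2*P3)) := by
          apply mul_le_mul_of_nonneg_left
            (sqrt_add3 (by positivity) (by positivity) (by positivity)) (Real.sqrt_nonneg 3)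
      _ = Real.sqrt 3 * Su := by
          rw [hSu, Real.sqrt_mul (sq_nonneg Δt), Real.sqrt_mul (sq_nonneg h₁),
            Real.sqrt_mul (sq_nonneg h₂), Real.sqrt_sq hΔ.le, Real.sqrt_sq hh1.le,
            Real.sqrt_sq hh2.le]
  -- bound the v factor
  have hFv : Real.sqrt (∫ p in Sb, (v p - mv)^2) ≤ 3 * M * Real.sqrt (V2 + NV) := by
    calc Real.sqrt (∫ p in Sb, (v p - mv)^2)
        ≤ Real.sqrt (3 * (Δt^2*Q1 + h₁^2*Q2 + h₂^2*Q3)) := Real.sqrt_le_sqrt hPv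
      _ ≤ Real.sqrt (9 * M^2 * (V2 + NV)) := by
          apply Real.sqrt_le_sqrt
          have d1 : Δt^2 ≤ M^2 := pow_le_pow_left₀ hΔ.le hMD 2
          have d2 : h₁^2 ≤ M^2 := pow_le_pow_left₀ hh1.le hM1 2
          have d3 : h₂^2 ≤ M^2 := pow_le_pow_left₀ hh2.le hM2 2
          have t1 : Δt^2*Q1 ≤ M^2*NV := mul_le_mul d1 hQ1le hQ1nn (sq_nonneg M)
          have t2 : h₁^2*Q2 ≤ M^2*NV := mul_le_mul d2 hQ2le hQ2nn (sq_nonneg M)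
          have t3 : h₂^2*Q3 ≤ M^2*NV := mul_le_mul d3 hQ3le hQ3nn (sq_nonneg M)
          have t4 : 0 ≤ M^2*V2 := mul_nonneg (sq_nonneg M) hV2nn
          linarith [t1, t2, t3, t4]
      _ = 3 * M * Real.sqrt (V2 + NV) := by
          rw [show (9:ℝ) * M^2 = (3*M)^2 by ring, Real.sqrt_mul (sq_nonneg (3*M)),
            Real.sqrt_sq (by positivity)]
  -- combine
  rw [hstep0]
  have hmid := hcs.trans (mul_le_mul hFu hFv (Real.sqrt_nonneg _)
    (by positivity))
  calc |∫ p in Sb, (u p - mu) * (v p - mv)|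
      ≤ (Real.sqrt 3 * Su) * (3 * M * Real.sqrt (V2 + NV)) := hmid
    _ = (Real.sqrt 3 * 3) * (M * Su * Real.sqrt (V2 + NV)) := by ring
    _ ≤ 9 * (M * Su * Real.sqrt (V2 + NV)) := by
        have h3 : Real.sqrt 3 ≤ 3 := by
          have h9 := Real.sqrt_le_sqrt (show (3:ℝ) ≤ 9 by norm_num)
          rwa [show (9:ℝ) = 3^2 by norm_num,
            Real.sqrt_sq (by norm_num : (0:ℝ) ≤ 3)] at h9
        have hfacts : 0 ≤ M * Su * Real.sqrt (V2 + NV) := by positivity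
        apply mul_le_mul_of_nonneg_right _ hfacts
        linarith [Real.sqrt_nonneg 3]
    _ = 9 * M * Su * Real.sqrt (V2 + NV) := by ring
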